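/- For every t ∈ {3, 4, 5, 6, 8} there exists a c.a.h. {3}-GDD of type 6^t (t groups of size 6). -/

import Mathlib

/-- An alternating cycle through the set `B` of blocks: a cyclic ordering
`f : ZMod m → Finset ℕ` of all blocks of `B` (`m = B.card`) together with chosen
points `c i ∈ f i ∩ f (i+1)` such that `c i ≠ c (i+1)` for all `i`. -/
def IsAltCycleOn (B : Finset (Finset ℕ)) (m : ℕ)
    (f : ZMod m → Finset ℕ) (c : ZMod m → ℕ) : Prop :=
  m = B.card ∧ (∀ i, f i ∈ B) ∧ (∀ b ∈ B, ∃ i, f i = b) ∧ Function.Injective f ∧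
    (∀ i, c i ∈ f i ∧ c i ∈ f (i + 1)) ∧ ∀ i, c i ≠ c (i + 1)

/-- A set system (with block collection `A`) has an alternating hamiltonian cycle;
for a system with a single block the condition is taken to hold trivially. -/
def HasAltHamCycle (A : Finset (Finset ℕ)) : Prop :=
  A.card = 1 ∨ ∃ m f c, IsAltCycleOn A m f c

/-- The cycle is colorful: every point lying in the intersection of two distinct
blocks occurs as one of the chosen points `c i`. -/
def ColorfulOn (A : Finset (Finset ℕ)) (m : ℕ) (c : ZMod m → ℕ) : Prop :=
  ∀ x : ℕ, (∃ B ∈ A, ∃ B' ∈ A, B ≠ B' ∧ x ∈ B ∧ x ∈ B') → ∃ i, c i = x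

/-- A set system (with block collection `A`) is colorful alternating hamiltonian
(c.a.h.); for a system with a single block the condition is taken to hold trivially. -/
def HasCAHCycle (A : Finset (Finset ℕ)) : Prop :=
  A.card = 1 ∨ ∃ m f c, IsAltCycleOn A m f c ∧ ColorfulOn A m c
/-- A group divisible design `(X, G, A)`: `G` is a partition of `X` into nonempty
groups, every 2-subset of `X` not contained in a group lies in exactly one block,
and every block meets every group in at most one point. -/
def IsGDD (X : Finset ℕ) (G : Finset (Finset ℕ)) (A : Finset (Finset ℕ)) : Prop :=
  (∀ g ∈ G, g ⊆ X ∧ g.Nonempty) ∧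
  (∀ x ∈ X, ∃! g, g ∈ G ∧ x ∈ g) ∧
  (∀ B ∈ A, B ⊆ X) ∧
  (∀ x ∈ X, ∀ y ∈ X, x ≠ y → (∀ g ∈ G, ¬ (x ∈ g ∧ y ∈ g)) →
    ∃! B, B ∈ A ∧ x ∈ B ∧ y ∈ B) ∧
  ∀ B ∈ A, ∀ g ∈ G, (B ∩ g).card ≤ 1

/-- The type of a GDD: the multiset of its group sizes. -/
def GDDType (G : Finset (Finset ℕ)) : Multiset ℕ := G.val.map Finset.card

/-- A `{3}`-GDD: a GDD all of whose blocks have size 3. -/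
def IsThreeGDD (X : Finset ℕ) (G A : Finset (Finset ℕ)) : Prop :=
  IsGDD X G A ∧ ∀ B ∈ A, B.card = 3

/-- Existence of a c.a.h. `{3}`-GDD of type `T`. -/
def CAHThreeGDD (T : Multiset ℕ) : Prop :=
  ∃ X G A, IsThreeGDD X G A ∧ GDDType G = T ∧ HasCAHCycle A


namespace CAHBuild

def pm (N : ℕ) : List ℕ → ℕ
  | [a, b, c] => 2 ^ (a * N + b) ||| 2 ^ (a * N + c) ||| 2 ^ (b * N + c)
  | _ => 0

def shapeOK (N : ℕ) : List ℕ → Bool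
  | [a, b, c] => a < b && (b < c && c < N)
  | _ => false

def pfold (N : ℕ) (acc : ℕ) : List (List ℕ) → Option ℕ
  | [] => some acc
  | b :: r => if pm N b &&& acc = 0 then pfold N (acc ||| pm N b) r else none

def checkT (t T : ℕ) : Bool :=
  (List.range (6*t)).all fun x => (List.range (6*t)).all fun y =>
    !(decide (x < y)) || (T.testBit (x*(6*t)+y) == !(x/6 == y/6))

def checkCycle (Bs : List (List ℕ)) (Cs : List ℕ) : Bool :=
  (List.range Bs.length).all fun i =>
    decide (Cs.getD i 0 ∈ Bs.getD i []) &&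
    (decide (Cs.getD i 0 ∈ Bs.getD ((i+1) % Bs.length) []) &&
     decide (Cs.getD i 0 ≠ Cs.getD ((i+1) % Bs.length) 0))

def checkColors (N : ℕ) (Cs : List ℕ) : Bool :=
  (List.range N).all fun x => decide (x ∈ Cs)

lemma shape_spec {N : ℕ} {l : List ℕ} (h : shapeOK N l = true) :
    ∃ a b c, l = [a, b, c] ∧ a < b ∧ b < c ∧ c < N := by
  match l with
  | [a, b, c] =>
    refine ⟨a, b, c, rfl, ?_⟩
    simpa [shapeOK, and_assoc] using h
  | [] | [_] | [_, _] | _::_::_::_::_ => simp [shapeOK] at h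

lemma land_eq_zero_iff {a b : ℕ} :
    a &&& b = 0 ↔ ∀ k, ¬(a.testBit k = true ∧ b.testBit k = true) := by
  constructor
  · intro h k hk
    have := congrArg (Nat.testBit · k) h
    simp [Nat.testBit_land, hk.1, hk.2] at this
  · intro h
    apply Nat.eq_of_testBit_eq
    intro k
    simp only [Nat.testBit_land, Nat.zero_testBit]
    by_cases ha : a.testBit k
    · by_cases hb : b.testBit k
      · exact absurd ⟨ha, hb⟩ (h k)
      · simp [hb]
    · simp [ha]

lemma pm_testBit {N a b c q : ℕ} :
    (pm N [a,b,c]).testBit q = true ↔ q = a*N+b ∨ q = a*N+c ∨ q = b*N+c := by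
  show ((2 ^ (a*N+b) ||| 2 ^ (a*N+c) ||| 2 ^ (b*N+c)).testBit q) = true ↔ _
  simp only [Nat.testBit_lor, Nat.testBit_two_pow, Bool.or_eq_true, decide_eq_true_eq]
  tauto

lemma pidx_inj {N x y a b : ℕ} (hy : y < N) (hb : b < N)
    (h : x*N+y = a*N+b) : x = a ∧ y = b := by
  have h1 : (x*N+y) % N = (a*N+b) % N := by rw [h]
  rw [Nat.mul_comm x N, Nat.mul_comm a N, Nat.mul_add_mod, Nat.mul_add_mod,
    Nat.mod_eq_of_lt hy, Nat.mod_eq_of_lt hb] at h1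
  subst h1
  have hN : 0 < N := by omega
  have : x * N = a * N := by omega
  exact ⟨Nat.eq_of_mul_eq_mul_right hN this, rfl⟩

lemma mem_triple_pairs {a b c x y : ℕ} (hab : a < b) (hbc : b < c)
    (hx : x ∈ [a,b,c]) (hy : y ∈ [a,b,c]) (hxy : x < y) :
    (x = a ∧ y = b) ∨ (x = a ∧ y = c) ∨ (x = b ∧ y = c) := by
  simp only [List.mem_cons, List.mem_singleton, List.not_mem_nil, or_false] at hx hy
  omega

lemma pfold_bits {N : ℕ} : ∀ {l : List (List ℕ)} {acc T : ℕ},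
    pfold N acc l = some T →
    ∀ k, (T.testBit k = true ↔ acc.testBit k = true ∨ ∃ b ∈ l, (pm N b).testBit k = true)
  | [], acc, T => by
    intro h k
    simp only [pfold, Option.some.injEq] at h
    subst h
    simp
  | b :: r, acc, T => by
    intro h k
    simp only [pfold] at h
    split at h
    · rw [pfold_bits h k]
      simp only [Nat.testBit_lor, List.mem_cons]
      constructor
      · rintro (hh | hb)
        · rcases Bool.or_eq_true _ _ |>.mp hh with h1 | h1
          · exact Or.inl h1
          · exact Or.inr ⟨b, Or.inl rfl, h1⟩
        · obtain ⟨b', hb', hbit⟩ := hb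
          exact Or.inr ⟨b', Or.inr hb', hbit⟩
      · rintro (h1 | ⟨b', hb' | hb', hbit⟩)
        · exact Or.inl (by simp [h1])
        · subst hb'; exact Or.inl (by simp [hbit])
        · exact Or.inr ⟨b', hb', hbit⟩
    · exact absurd h (by simp)

lemma pfold_disj {N : ℕ} : ∀ {l : List (List ℕ)} {acc T : ℕ},
    pfold N acc l = some T → ∀ b ∈ l, pm N b &&& acc = 0
  | [], acc, T => by intro _ b hb; simp at hb
  | b :: r, acc, T => by
    intro h b' hb'
    simp only [pfold] at h
    split at h
    · rename_i hz
      rcases List.mem_cons.mp hb' with h1 | h1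
      · subst h1; exact hz
      · have := pfold_disj h b' h1
        rw [land_eq_zero_iff] at this ⊢
        intro k hk
        exact this k ⟨hk.1, by simp [Nat.testBit_lor, hk.2]⟩
    · exact absurd h (by simp)

lemma pfold_pairwise {N : ℕ} : ∀ {l : List (List ℕ)} {acc T : ℕ},
    pfold N acc l = some T → l.Pairwise (fun b b' => pm N b &&& pm N b' = 0)
  | [], acc, T => by intro _; exact List.Pairwise.nil
  | b :: r, acc, T => by
    intro h
    simp only [pfold] at h
    split at h
    · refine List.Pairwise.cons ?_ (pfold_pairwise h)
      intro b' hb'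
      have := pfold_disj h b' hb'
      rw [land_eq_zero_iff] at this ⊢
      intro k hk
      exact this k ⟨hk.2, by simp [Nat.testBit_lor, hk.1]⟩
    · exact absurd h (by simp)



lemma land_self' (a : ℕ) : a &&& a = a := by
  apply Nat.eq_of_testBit_eq
  intro k
  simp [Nat.testBit_land]

lemma sorted_triple_ext {a b c a' b' c' : ℕ} (h1 : a < b) (h2 : b < c)
    (h1' : a' < b') (h2' : b' < c')
    (h : ([a,b,c] : List ℕ).toFinset = ([a',b',c'] : List ℕ).toFinset) :
    a = a' ∧ b = b' ∧ c = c' := by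
  have e : ∀ x : ℕ, (x = a ∨ x = b ∨ x = c) ↔ (x = a' ∨ x = b' ∨ x = c') := by
    intro x
    have := Finset.ext_iff.mp h x
    simpa using this
  have ea := (e a).mp (Or.inl rfl)
  have eb := (e b).mp (Or.inr (Or.inl rfl))
  have ec := (e c).mp (Or.inr (Or.inr rfl))
  have ea' := (e a').mpr (Or.inl rfl)
  have eb' := (e b').mpr (Or.inr (Or.inl rfl))
  have ec' := (e c').mpr (Or.inr (Or.inr rfl))
  omega

def grpEmb (k : ℕ) : ℕ ↪ ℕ := ⟨fun i => 6*k+i, fun a b h => by have h' : 6*k+a = 6*k+b := h; omega⟩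

def grp (k : ℕ) : Finset ℕ := (Finset.range 6).map (grpEmb k)

lemma mem_grp {x k : ℕ} : x ∈ grp k ↔ 6*k ≤ x ∧ x < 6*k+6 := by
  simp only [grp, Finset.mem_map, Finset.mem_range, grpEmb, Function.Embedding.coeFn_mk]
  constructor
  · rintro ⟨i, hi, rfl⟩; show 6*k ≤ 6*k+i ∧ 6*k+i < 6*k+6; omega
  · rintro ⟨h1, h2⟩; exact ⟨x - 6*k, by omega, by show 6*k+(x-6*k) = x; omega⟩

lemma grp_card (k : ℕ) : (grp k).card = 6 := by
  simp [grp]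

lemma grp_inj : Function.Injective grp := by
  intro k k' h
  have h1 : (6*k : ℕ) ∈ grp k := mem_grp.mpr (by omega)
  have h2 : (6*k' : ℕ) ∈ grp k' := mem_grp.mpr (by omega)
  rw [h] at h1; rw [← h] at h2
  rw [mem_grp] at h1 h2
  omega

theorem build (t : ℕ) (ht : 0 < t) (Bs : List (List ℕ)) (Cs : List ℕ) (T : ℕ)
    (hsh : Bs.all (shapeOK (6*t)) = true)
    (hpf : pfold (6*t) 0 Bs = some T)
    (hT : checkT t T = true)
    (hlen : Cs.length = Bs.length)
    (hcyc : checkCycle Bs Cs = true)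
    (hcol : checkColors (6*t) Cs = true) :
    CAHThreeGDD (Multiset.replicate t 6) := by
  set N := 6*t with hN
  -- shape of blocks
  have hshape : ∀ b ∈ Bs, ∃ x y z, b = [x,y,z] ∧ x < y ∧ y < z ∧ z < N :=
    fun b hb => shape_spec (List.all_eq_true.mp hsh b hb)
  have memlt : ∀ b ∈ Bs, ∀ x ∈ b, x < N := by
    intro b hb x hx
    obtain ⟨a, b', c, rfl, u1, u2, u3⟩ := hshape b hb
    simp only [List.mem_cons, List.mem_singleton, List.not_mem_nil, or_false] at hx
    omega
  -- T bit characterization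
  have hTbit : ∀ x y, x < y → y < N → (T.testBit (x*N+y) = true ↔ x/6 ≠ y/6) := by
    intro x y hxy hyN
    have hx := List.all_eq_true.mp hT x (List.mem_range.mpr (by omega))
    have h2 := List.all_eq_true.mp hx y (List.mem_range.mpr hyN)
    simp only [hxy, decide_true, Bool.not_true, Bool.false_or, beq_iff_eq] at h2
    rw [← hN] at h2
    rw [h2]
    simp
  -- T bit iff pair in a block
  have pairT : ∀ x y, x < y → y < N →
      (T.testBit (x*N+y) = true ↔ ∃ b ∈ Bs, x ∈ b ∧ y ∈ b) := by
    intro x y hxy hy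
    rw [pfold_bits hpf]
    simp only [Nat.zero_testBit, Bool.false_eq_true, false_or]
    constructor
    · rintro ⟨b, hb, hbit⟩
      obtain ⟨a, b', c, rfl, u1, u2, u3⟩ := hshape b hb
      rw [pm_testBit] at hbit
      refine ⟨[a,b',c], hb, ?_⟩
      rcases hbit with h | h | h
      · obtain ⟨rfl, rfl⟩ := pidx_inj hy (by omega) h; simp
      · obtain ⟨rfl, rfl⟩ := pidx_inj hy (by omega) h; simp
      · obtain ⟨rfl, rfl⟩ := pidx_inj hy (by omega) h; simp
    · rintro ⟨b, hb, hxb, hyb⟩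
      obtain ⟨a, b', c, rfl, u1, u2, u3⟩ := hshape b hb
      refine ⟨[a,b',c], hb, ?_⟩
      rw [pm_testBit]
      rcases mem_triple_pairs u1 u2 hxb hyb hxy with ⟨rfl, rfl⟩ | ⟨rfl, rfl⟩ | ⟨rfl, rfl⟩ <;>
        tauto
  have pmbit : ∀ b ∈ Bs, ∀ x ∈ b, ∀ y ∈ b, x < y → (pm N b).testBit (x*N+y) = true := by
    intro b hb x hx y hy hxy
    obtain ⟨a, b', c, rfl, u1, u2, u3⟩ := hshape b hb
    rw [pm_testBit]
    rcases mem_triple_pairs u1 u2 hx hy hxy with ⟨rfl, rfl⟩ | ⟨rfl, rfl⟩ | ⟨rfl, rfl⟩ <;> tauto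
  have pairUniq : ∀ x y b b', b ∈ Bs → b' ∈ Bs → x ∈ b → y ∈ b → x ∈ b' → y ∈ b' →
      x ≠ y → b = b' := by
    intro x y b b' hb hb' hxb hyb hxb' hyb' hxy
    by_contra hne
    have hsym : Symmetric (fun u v : List ℕ => pm N u &&& pm N v = 0) := by
      intro u v h; rwa [Nat.land_comm]
    haveI : Std.Symm (fun u v : List ℕ => pm N u &&& pm N v = 0) := ⟨fun _ _ h => hsym h⟩
    have hdisj := (pfold_pairwise hpf).forall hb hb' hne
    rcases Nat.lt_or_ge x y with h | h
    · exact (land_eq_zero_iff.mp hdisj (x*N+y))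
        ⟨pmbit b hb x hxb y hyb h, pmbit b' hb' x hxb' y hyb' h⟩
    · have h' : y < x := by omega
      exact (land_eq_zero_iff.mp hdisj (y*N+x))
        ⟨pmbit b hb y hyb x hxb h', pmbit b' hb' y hyb' x hxb' h'⟩
  -- nodup
  have pmne : ∀ b ∈ Bs, pm N b ≠ 0 := by
    intro b hb h0
    obtain ⟨a, b', c, rfl, u1, u2, u3⟩ := hshape b hb
    have : (pm N [a,b',c]).testBit (a*N+b') = true := pm_testBit.mpr (by tauto)
    rw [h0, Nat.zero_testBit] at this
    exact Bool.false_ne_true this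
  have hnodupBs : Bs.Nodup := by
    refine (pfold_pairwise hpf).imp_of_mem ?_
    intro a b ha hb hR
    intro heq
    subst heq
    have hR' : pm N a &&& pm N a = 0 := hR
    rw [land_self'] at hR'
    exact pmne a ha hR'
  have hfinj : ∀ b ∈ Bs, ∀ b' ∈ Bs, b.toFinset = b'.toFinset → b = b' := by
    intro b hb b' hb' he
    obtain ⟨a1, b1, c1, rfl, u1, u2, u3⟩ := hshape b hb
    obtain ⟨a2, b2, c2, rfl, v1, v2, v3⟩ := hshape b' hb'
    obtain ⟨rfl, rfl, rfl⟩ := sorted_triple_ext u1 u2 v1 v2 he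
    rfl
  have hnodupMap : (Bs.map List.toFinset).Nodup := hnodupBs.map_on hfinj
  -- the block set
  set A : Finset (Finset ℕ) := (Bs.map List.toFinset).toFinset with hA
  have hmemA : ∀ S, S ∈ A ↔ ∃ b ∈ Bs, b.toFinset = S := by
    intro S
    simp [hA, List.mem_map]
  have hcardA : A.card = Bs.length := by
    rw [hA, List.toFinset_card_of_nodup hnodupMap, List.length_map]
  -- groups
  set G : Finset (Finset ℕ) := (Finset.range t).map ⟨grp, grp_inj⟩ with hG
  have hmemG : ∀ S, S ∈ G ↔ ∃ k < t, grp k = S := by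
    intro S; simp [hG]
  -- colors facts
  have hcol' : ∀ x < N, x ∈ Cs := by
    intro x hx
    have := List.all_eq_true.mp hcol x (List.mem_range.mpr hx)
    exact of_decide_eq_true this
  have hm0 : 0 < Bs.length := by
    have h0 : (0:ℕ) ∈ Cs := hcol' 0 (by omega)
    rcases Cs with _ | ⟨c0, cs⟩
    · simp at h0
    · simp at hlen; omega
  have hcy : ∀ i < Bs.length, Cs.getD i 0 ∈ Bs.getD i [] ∧
      Cs.getD i 0 ∈ Bs.getD ((i+1) % Bs.length) [] ∧
      Cs.getD i 0 ≠ Cs.getD ((i+1) % Bs.length) 0 := by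
    intro i hi
    have := List.all_eq_true.mp hcyc i (List.mem_range.mpr hi)
    simp only [checkCycle, Bool.and_eq_true, decide_eq_true_eq] at this
    exact ⟨this.1, this.2.1, this.2.2⟩
  -- the main ∃! for ordered pairs
  have main : ∀ u v, u < v → v < N → u/6 ≠ v/6 →
      ∃! B, B ∈ A ∧ u ∈ B ∧ v ∈ B := by
    intro u v huv hv hq
    obtain ⟨b, hb, hub, hvb⟩ := (pairT u v huv hv).mp ((hTbit u v huv hv).mpr hq)
    refine ⟨b.toFinset, ⟨(hmemA _).mpr ⟨b, hb, rfl⟩, List.mem_toFinset.mpr hub,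
      List.mem_toFinset.mpr hvb⟩, ?_⟩
    rintro B' ⟨hB', huB', hvB'⟩
    obtain ⟨b', hb', rfl⟩ := (hmemA B').mp hB'
    rw [List.mem_toFinset] at huB' hvB'
    rw [pairUniq u v b' b hb' hb huB' hvB' hub hvb (by omega)]
  refine ⟨Finset.range N, G, A, ⟨⟨?_, ?_, ?_, ?_, ?_⟩, ?_⟩, ?_, ?_⟩
  · -- groups subset X and nonempty
    intro g hg
    obtain ⟨k, hk, rfl⟩ := (hmemG g).mp hg
    constructor
    · intro x hx
      rw [mem_grp] at hx
      rw [Finset.mem_range]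
      omega
    · exact ⟨6*k, mem_grp.mpr (by omega)⟩
  · -- unique group
    intro x hx
    rw [Finset.mem_range] at hx
    refine ⟨grp (x/6), ⟨(hmemG _).mpr ⟨x/6, by omega, rfl⟩, mem_grp.mpr (by omega)⟩, ?_⟩
    rintro g ⟨hg, hxg⟩
    obtain ⟨k, hk, rfl⟩ := (hmemG g).mp hg
    rw [mem_grp] at hxg
    have : k = x/6 := by omega
    rw [this]
  · -- blocks subset X
    intro B hB x hx
    obtain ⟨b, hb, rfl⟩ := (hmemA B).mp hB
    rw [List.mem_toFinset] at hx
    exact Finset.mem_range.mpr (memlt b hb x hx)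
  · -- pair coverage
    intro x hx y hy hxy hg
    rw [Finset.mem_range] at hx hy
    have hq : x/6 ≠ y/6 := by
      intro he
      refine hg (grp (x/6)) ((hmemG _).mpr ⟨x/6, by omega, rfl⟩)
        ⟨mem_grp.mpr (by omega), mem_grp.mpr (by omega)⟩
    rcases Nat.lt_or_ge x y with h | h
    · exact main x y h hy hq
    · have h' : y < x := by omega
      obtain ⟨B, ⟨h1, h2, h3⟩, hu⟩ := main y x h' hx (by omega)
      exact ⟨B, ⟨h1, h3, h2⟩, fun B' ⟨g1, g2, g3⟩ => hu B' ⟨g1, g3, g2⟩⟩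
  · -- block ∩ group ≤ 1
    intro B hB g hg
    obtain ⟨b, hb, rfl⟩ := (hmemA B).mp hB
    obtain ⟨k, hk, rfl⟩ := (hmemG g).mp hg
    obtain ⟨a, b', c, rfl, u1, u2, u3⟩ := hshape b hb
    have q1 : a/6 ≠ b'/6 := (hTbit a b' u1 (by omega)).mp
      ((pairT a b' u1 (by omega)).mpr ⟨[a,b',c], hb, by simp, by simp⟩)
    have q2 : a/6 ≠ c/6 := (hTbit a c (by omega) u3).mp
      ((pairT a c (by omega) u3).mpr ⟨[a,b',c], hb, by simp, by simp⟩)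
    have q3 : b'/6 ≠ c/6 := (hTbit b' c u2 u3).mp
      ((pairT b' c u2 u3).mpr ⟨[a,b',c], hb, by simp, by simp⟩)
    rw [Finset.card_le_one]
    intro u hu v hv
    rw [Finset.mem_inter, List.mem_toFinset, mem_grp] at hu hv
    obtain ⟨hu1, hu2⟩ := hu
    obtain ⟨hv1, hv2⟩ := hv
    simp only [List.mem_cons, List.mem_singleton, List.not_mem_nil, or_false] at hu1 hv1
    omega
  · -- block sizes
    intro B hB
    obtain ⟨b, hb, rfl⟩ := (hmemA B).mp hB
    obtain ⟨a, b', c, rfl, u1, u2, u3⟩ := hshape b hb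
    have hnd : ([a,b',c] : List ℕ).Nodup := by
      simp only [List.nodup_cons, List.mem_cons, List.mem_singleton, List.not_mem_nil,
        or_false, List.nodup_nil, and_true, List.not_mem_nil, not_false_iff]
      omega
    rw [List.toFinset_card_of_nodup hnd]
    rfl
  · -- GDD type
    rw [GDDType, hG, Finset.map_val, Multiset.map_map]
    refine Multiset.eq_replicate.mpr ⟨?_, ?_⟩
    · simp
    · intro b hb
      obtain ⟨k, _, rfl⟩ := Multiset.mem_map.mp hb
      exact grp_card k
  · -- HasCAHCycle
    right
    haveI : NeZero Bs.length := ⟨by omega⟩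
    refine ⟨Bs.length, fun i => (Bs.map List.toFinset).getD i.val ∅,
      fun i => Cs.getD i.val 0, ⟨?_, ?_, ?_, ?_, ?_, ?_⟩, ?_⟩
    · exact hcardA.symm
    · intro i
      show (List.map List.toFinset Bs).getD i.val ∅ ∈ A
      have hlt : i.val < (Bs.map List.toFinset).length := by
        rw [List.length_map]; exact ZMod.val_lt i
      rw [List.getD_eq_getElem _ _ hlt]
      exact List.mem_toFinset.mpr (List.getElem_mem hlt)
    · intro S hS
      obtain ⟨b, hb, rfl⟩ := (hmemA S).mp hS
      obtain ⟨j, hj⟩ := List.mem_iff_get.mp hb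
      refine ⟨(j.val : ZMod Bs.length), ?_⟩
      show (List.map List.toFinset Bs).getD ((j.val : ℕ) : ZMod Bs.length).val ∅ = _
      have hv : ((j.val : ℕ) : ZMod Bs.length).val = j.val := by
        rw [ZMod.val_natCast, Nat.mod_eq_of_lt j.isLt]
      have hlt : ((j.val : ℕ) : ZMod Bs.length).val < (Bs.map List.toFinset).length := by
        rw [List.length_map, hv]; exact j.isLt
      rw [List.getD_eq_getElem _ _ hlt]
      simp only [List.getElem_map]
      congr 1
      rw [← hj]
      simp [List.get_eq_getElem, hv]
    · intro i j hij
      have hij : (List.map List.toFinset Bs).getD i.val ∅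
          = (List.map List.toFinset Bs).getD j.val ∅ := hij
      have hlti : i.val < (Bs.map List.toFinset).length := by
        rw [List.length_map]; exact ZMod.val_lt i
      have hltj : j.val < (Bs.map List.toFinset).length := by
        rw [List.length_map]; exact ZMod.val_lt j
      rw [List.getD_eq_getElem _ _ hlti, List.getD_eq_getElem _ _ hltj] at hij
      have := (List.nodup_iff_injective_get.mp hnodupMap)
        (a₁ := ⟨i.val, hlti⟩) (a₂ := ⟨j.val, hltj⟩) (by simpa [List.get_eq_getElem] using hij)
      have hv : i.val = j.val := congrArg Fin.val this
      exact ZMod.val_injective Bs.length hv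
    · intro i
      have hvi : i.val < Bs.length := ZMod.val_lt i
      have hsucc : (i+1).val = (i.val + 1) % Bs.length := by
        rw [ZMod.val_add, ZMod.val_one_eq_one_mod]
        conv_rhs => rw [Nat.add_mod]
        rw [Nat.mod_eq_of_lt hvi]
      have fmap : ∀ j, j < Bs.length →
          (List.map List.toFinset Bs).getD j ∅ = (Bs.getD j []).toFinset := by
        intro j hj
        rw [List.getD_eq_getElem _ _ (by simpa using hj), List.getD_eq_getElem _ _ hj,
          List.getElem_map]
      have h1 := hcy i.val hvi
      constructor
      · show Cs.getD i.val 0 ∈ (List.map List.toFinset Bs).getD i.val ∅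
        rw [fmap _ hvi, List.mem_toFinset]
        exact h1.1
      · show Cs.getD i.val 0 ∈ (List.map List.toFinset Bs).getD (i+1).val ∅
        rw [hsucc, fmap _ (Nat.mod_lt _ hm0), List.mem_toFinset]
        exact h1.2.1
    · intro i
      have hvi : i.val < Bs.length := ZMod.val_lt i
      have hsucc : (i+1).val = (i.val + 1) % Bs.length := by
        rw [ZMod.val_add, ZMod.val_one_eq_one_mod]
        conv_rhs => rw [Nat.add_mod]
        rw [Nat.mod_eq_of_lt hvi]
      show Cs.getD i.val 0 ≠ Cs.getD (i+1).val 0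
      rw [hsucc]
      exact (hcy i.val hvi).2.2
    · -- colorful
      rintro x ⟨B, hB, B', hB', hne, hxB, _⟩
      obtain ⟨b, hb, rfl⟩ := (hmemA B).mp hB
      have hxN : x < N := memlt b hb x (List.mem_toFinset.mp hxB)
      obtain ⟨j, hj⟩ := List.mem_iff_get.mp (hcol' x hxN)
      refine ⟨((j : ℕ) : ZMod Bs.length), ?_⟩
      show Cs.getD (((j : ℕ) : ZMod Bs.length)).val 0 = x
      have hjlt : (j : ℕ) < Bs.length := by rw [← hlen]; exact j.isLt
      rw [ZMod.val_natCast, Nat.mod_eq_of_lt hjlt, List.getD_eq_getElem _ _ j.isLt]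
      rw [← List.get_eq_getElem]
      exact hj
def bs3 : List (List ℕ) := [[3, 8, 15], [3, 6, 14], [1, 11, 14], [1, 10, 12], [2, 10, 16], [5, 7, 16], [5, 6, 12], [0, 7, 12], [0, 10, 17], [3, 10, 13], [3, 11, 16], [5, 11, 17], [5, 9, 14], [4, 9, 16], [0, 6, 16], [2, 6, 15], [2, 7, 14], [1, 7, 13], [4, 6, 13], [1, 6, 17], [2, 9, 17], [2, 11, 13], [4, 11, 12], [4, 7, 15], [3, 7, 17], [4, 8, 17], [4, 10, 14], [5, 10, 15], [5, 8, 13], [0, 9, 13], [3, 9, 12], [2, 8, 12], [0, 8, 14], [0, 11, 15], [1, 9, 15], [1, 8, 16]]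
def cs3 : List ℕ := [3, 14, 1, 10, 16, 5, 12, 0, 10, 3, 11, 5, 9, 16, 6, 2, 7, 13, 6, 17, 2, 11, 4, 7, 17, 4, 10, 5, 13, 9, 12, 8, 0, 15, 1, 8]
def bs4 : List (List ℕ) := [[0, 10, 16], [0, 14, 18], [1, 14, 23], [2, 12, 23], [1, 11, 12], [5, 11, 14], [2, 6, 14], [6, 15, 22], [3, 14, 22], [3, 11, 17], [4, 11, 23], [4, 8, 13], [1, 13, 21], [0, 15, 21], [4, 10, 15], [4, 9, 14], [7, 14, 20], [11, 15, 20], [11, 16, 22], [1, 10, 22], [1, 8, 20], [8, 16, 23], [1, 9, 16], [1, 7, 15], [2, 15, 19], [2, 7, 17], [9, 17, 20], [3, 12, 20], [3, 10, 21], [10, 14, 19], [8, 14, 21], [6, 12, 21], [5, 6, 23], [7, 13, 23], [6, 13, 19], [0, 11, 19], [0, 6, 17], [8, 17, 22], [0, 8, 12], [0, 7, 22], [5, 13, 22], [3, 9, 13], [3, 8, 19], [9, 12, 19], [0, 9, 23], [0, 13, 20], [4, 6, 20], [3, 6, 16], [3, 15, 23], [9, 15, 18], [4, 16, 18], [7,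 16, 21], [3, 7, 18], [5, 17, 18], [5, 16, 19], [1, 17, 19], [1, 6, 18], [10, 12, 18], [4, 12, 22], [2, 9, 22], [2, 16, 20], [5, 10, 20], [5, 8, 15], [2, 8, 18], [11, 13, 18], [2, 10, 13], [2, 11, 21], [5, 9, 21], [5, 7, 12], [4, 7, 19], [4, 17, 21], [10, 17, 23]]
def cs4 : List ℕ := [0, 14, 23, 12, 11, 14, 6, 22, 3, 11, 4, 13, 21, 15, 4, 14, 20, 11, 22, 1, 8, 16, 1, 15, 2, 17, 20, 3, 10, 14, 21, 6, 23, 13, 19, 0, 17, 8, 0, 22, 13, 3, 19, 9, 0, 20, 6, 3, 15, 18, 16, 7, 18, 5, 19, 1, 18, 12, 22, 2, 20, 5, 8, 18, 13, 2, 21, 5, 7, 4, 17, 10]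
def bs5 : List (List ℕ) := [[2, 13, 23], [3, 13, 28], [4, 19, 28], [10, 19, 25], [3, 20, 25], [7, 20, 28], [0, 7, 23], [0, 14, 28], [8, 14, 24], [1, 8, 26], [7, 19, 26], [5, 9, 19], [3, 9, 21], [10, 21, 29], [10, 13, 27], [12, 19, 27], [3, 12, 29], [7, 13, 29], [13, 21, 25], [0, 8, 25], [0, 21, 27], [15, 22, 27], [11, 15, 23], [11, 13, 26], [4, 13, 18], [3, 11, 18], [1, 11, 29], [1, 13, 19], [14, 19, 29], [3, 10, 14], [10, 17, 18], [11, 17, 28], [11, 14, 21], [9, 14, 25], [2, 7, 25], [2, 6, 21], [5, 6, 16], [2, 16, 27], [2, 8, 12], [12, 20, 26], [16, 20, 29], [1, 9, 16], [9, 13, 22], [5, 8, 13], [3, 8, 22], [5, 22, 28], [5, 17, 21], [16, 21, 24], [6, 13, 24], [6, 14, 23], [14, 20, 27], [4, 9, 27], [4, 10, 12], [12, 22, 24], [16, 22, 25], [4, 17, 25], [3, 17, 23], [8, 23, 27], [3, 6, 27], [6, 17, 26], [10, 23, 26], [10, 16, 28], [12, 23, 28], [1, 6, 12], [1, 10, 22],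 [5, 10, 20], [9, 17, 20], [8, 17, 19], [3, 19, 24], [5, 7, 24], [3, 7, 16], [3, 15, 26], [4, 7, 15], [4, 21, 26], [2, 22, 26], [2, 15, 19], [0, 10, 15], [0, 18, 29], [9, 15, 29], [9, 18, 26], [15, 18, 24], [0, 17, 24], [1, 17, 27], [1, 7, 14], [4, 14, 22], [7, 17, 22], [7, 12, 21], [8, 21, 28], [2, 9, 28], [2, 17, 29], [6, 22, 29], [6, 15, 28], [8, 15, 20], [4, 6, 20], [4, 11, 24], [9, 23, 24], [0, 9, 12], [0, 11, 22], [2, 11, 20], [0, 13, 20], [0, 16, 26], [8, 16, 18], [5, 12, 18], [5, 15, 25], [1, 15, 21], [1, 18, 28], [7, 18, 27], [5, 11, 27], [11, 12, 25], [6, 18, 25], [0, 6, 19], [11, 16, 19], [4, 16, 23], [4, 8, 29], [5, 23, 29], [5, 14, 26], [2, 14, 18], [2, 10, 24], [1, 20, 24], [1, 23, 25]]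
def cs5 : List ℕ := [13, 28, 19, 25, 20, 7, 0, 14, 8, 26, 19, 9, 21, 10, 27, 12, 29, 13, 25, 0, 27, 15, 11, 13, 18, 11, 1, 19, 14, 10, 17, 11, 14, 25, 2, 6, 16, 2, 12, 20, 16, 9, 13, 8, 22, 5, 21, 24, 6, 14, 27, 4, 12, 22, 25, 17, 23, 27, 6, 26, 10, 28, 12, 1, 10, 20, 17, 19, 24, 7, 3, 15, 4, 26, 2, 15, 0, 29, 9, 18, 24, 17, 1, 14, 22, 7, 21, 28, 2, 29, 6, 15, 20, 4, 24, 9, 0, 11, 20, 0, 16, 18, 5, 15, 1, 18, 27, 11, 25, 6, 19, 16, 4, 29, 5, 14, 2, 24, 1, 23]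
def bs6 : List (List ℕ) := [[2, 17, 35], [1, 17, 23], [2, 6, 23], [2, 8, 15], [15, 18, 27], [3, 13, 27], [1, 13, 25], [1, 8, 29], [5, 8, 20], [10, 20, 29], [10, 12, 18], [12, 22, 32], [1, 28, 32], [1, 10, 27], [5, 10, 16], [5, 7, 30], [1, 9, 30], [9, 25, 31], [4, 11, 31], [11, 12, 28], [2, 7, 12], [2, 9, 29], [9, 16, 35], [10, 28, 35], [13, 28, 34], [5, 11, 34], [11, 29, 30], [3, 7, 29], [7, 15, 22], [3, 9, 15], [3, 23, 28], [4, 28, 30], [16, 21, 30], [3, 16, 24], [3, 12, 20], [6, 12, 30], [3, 6, 26], [3, 17, 31], [19, 29, 31], [16, 29, 33], [2, 24, 33], [2, 20, 25], [10, 25, 34], [17, 22, 34], [17, 20, 26], [15, 20, 35], [15, 26, 32], [2, 19, 26], [2, 10, 22], [0, 10, 23], [0, 6, 13], [11, 13, 18], [11, 16, 23], [5, 23, 31], [1, 22, 31], [1, 11, 35], [7, 18, 35], [6, 18, 25], [6, 15, 21], [10, 15, 31], [0, 8, 31], [4, 8, 22], [13, 22, 29], [4, 14, 29], [14, 22, 30],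 [2, 18, 30], [1, 14, 18], [8, 14, 19], [0, 19, 34], [0, 25, 33], [3, 22, 33], [3, 21, 35], [6, 29, 35], [12, 29, 34], [9, 12, 26], [11, 21, 26], [11, 17, 25], [17, 18, 32], [0, 16, 32], [0, 17, 30], [10, 26, 30], [10, 13, 24], [13, 19, 30], [20, 27, 30], [19, 27, 35], [5, 13, 35], [5, 12, 25], [22, 25, 35], [9, 22, 28], [5, 19, 28], [5, 14, 21], [3, 14, 25], [15, 25, 30], [3, 8, 30], [3, 10, 32], [7, 14, 32], [7, 19, 33], [1, 15, 19], [11, 15, 33], [5, 27, 33], [5, 9, 32], [9, 13, 23], [23, 25, 32], [11, 20, 32], [11, 22, 24], [0, 20, 24], [9, 14, 20], [14, 23, 27], [7, 23, 34], [3, 18, 34], [18, 28, 31], [0, 15, 28], [0, 12, 35], [12, 21, 27], [4, 27, 32], [4, 15, 34], [8, 27, 34], [8, 24, 32], [6, 19, 32], [5, 6, 22], [16, 22, 27], [16, 26, 31], [5, 18, 26], [5, 15, 24], [15, 23, 29], [0, 18, 29], [9, 18, 33], [23, 26, 33], [0, 22, 26], [0, 11, 14], [2, 14, 31], [7, 27,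 31], [0, 9, 27], [0, 7, 21], [1, 21, 24], [9, 19, 24], [4, 9, 17], [4, 12, 19], [12, 24, 31], [13, 21, 31], [8, 13, 33], [20, 28, 33], [7, 16, 28], [16, 19, 25], [8, 21, 25], [4, 10, 21], [10, 14, 33], [17, 21, 33], [9, 21, 34], [2, 16, 34], [2, 21, 28], [6, 14, 28], [1, 6, 16], [1, 12, 33], [8, 12, 23], [23, 24, 30], [7, 17, 24], [1, 7, 26], [1, 20, 34], [6, 20, 31], [6, 17, 27], [8, 17, 28], [8, 26, 35], [4, 23, 35], [4, 7, 25], [7, 13, 20], [4, 16, 20], [8, 16, 18], [4, 18, 24], [14, 24, 35], [14, 26, 34], [6, 24, 34], [4, 6, 33], [4, 13, 26], [2, 13, 32], [21, 29, 32], [5, 17, 29], [10, 17, 19], [3, 11, 19], [2, 11, 27]]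
def cs6 : List ℕ := [17, 23, 2, 15, 27, 13, 1, 8, 20, 10, 12, 32, 1, 10, 5, 30, 9, 31, 11, 12, 2, 9, 35, 28, 34, 11, 29, 7, 15, 3, 28, 30, 16, 3, 12, 6, 3, 31, 29, 33, 2, 25, 34, 17, 20, 15, 26, 2, 10, 0, 13, 11, 23, 31, 1, 35, 18, 6, 15, 31, 8, 22, 29, 14, 30, 18, 14, 19, 0, 33, 3, 35, 29, 12, 26, 11, 17, 32, 0, 30, 10, 13, 30, 27, 35, 5, 25, 22, 28, 5, 14, 25, 30, 3, 32, 7, 19, 15, 33, 5, 9, 23, 32, 11, 24, 20, 14, 23, 34, 18, 28, 0, 12, 27, 4, 34, 8, 32, 6, 22, 16, 26, 5, 15, 29, 18, 33, 26, 0, 14, 31, 27, 0, 21, 24, 9, 4, 12, 31, 13, 33, 28, 16, 25, 21, 10, 33, 21, 34, 2, 28, 6, 1, 12, 23, 24, 7, 1, 20, 6, 17, 8, 35, 4, 7, 20, 16, 18, 24, 14, 34, 6, 4, 13, 32, 29, 17, 19, 11, 2]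
def bs8 : List (List ℕ) := [[5, 32, 38], [27, 32, 41], [17, 31, 41], [0, 25, 31], [0, 16, 24], [3, 16, 30], [0, 30, 47], [1, 22, 47], [2, 22, 28], [0, 28, 38], [0, 23, 46], [16, 37, 46], [14, 33, 37], [0, 26, 33], [0, 20, 37], [22, 37, 42], [17, 40, 42], [6, 21, 40], [21, 24, 33], [16, 33, 36], [26, 36, 44], [21, 26, 39], [12, 34, 39], [25, 34, 41], [15, 41, 42], [0, 13, 42], [0, 18, 35], [4, 7, 18], [0, 7, 17], [17, 20, 26], [9, 26, 40], [25, 40, 46], [35, 36, 46], [20, 35, 39], [9, 20, 31], [10, 13, 31], [9, 13, 46], [9, 37, 47], [5, 17, 47], [17, 21, 25], [2, 21, 44], [2, 39, 46], [10, 28, 46], [0, 10, 12], [0, 14, 39], [5, 11, 14], [11, 32, 46], [12, 26, 32], [11, 26, 35], [2, 13, 35], [2, 9, 14], [9, 16, 23], [4, 16, 47], [4, 27, 46], [14, 24, 46], [6, 24, 43], [16, 22, 43], [8, 16, 28], [8, 25, 32], [3, 29, 32], [2, 19, 29], [2, 40, 43], [9, 21, 43], [9, 25, 38], [7, 16, 38],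 [7, 29, 37], [5, 24, 37], [5, 10, 26], [2, 26, 45], [21, 28, 45], [28, 32, 40], [15, 30, 40], [28, 30, 42], [28, 35, 43], [3, 14, 43], [3, 20, 46], [7, 34, 46], [7, 32, 42], [10, 34, 42], [2, 10, 32], [23, 32, 44], [5, 34, 44], [3, 9, 34], [3, 31, 36], [4, 31, 39], [9, 39, 42], [9, 22, 24], [3, 19, 24], [19, 30, 36], [15, 18, 36], [7, 15, 44], [20, 38, 44], [10, 19, 38], [10, 30, 44], [16, 31, 44], [11, 16, 39], [3, 10, 39], [3, 12, 41], [12, 19, 40], [1, 40, 44], [19, 28, 44], [1, 19, 37], [18, 25, 37], [7, 25, 45], [7, 36, 43], [10, 37, 43], [4, 37, 45], [4, 11, 44], [3, 22, 44], [3, 21, 42], [12, 21, 38], [13, 38, 43], [11, 13, 33], [1, 12, 33], [11, 12, 37], [11, 25, 42], [4, 14, 25], [7, 14, 41], [7, 21, 35], [1, 35, 41], [1, 15, 28], [17, 28, 33], [25, 33, 44], [19, 25, 43], [27, 34, 43], [16, 18, 34], [18, 26, 38], [4, 30, 38], [11, 22, 30], [3, 11, 17], [10, 17, 22], [6, 22,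 41], [6, 16, 42], [23, 31, 42], [23, 29, 30], [13, 30, 39], [13, 20, 25], [5, 8, 20], [5, 23, 28], [23, 35, 38], [2, 24, 38], [2, 27, 47], [18, 27, 42], [24, 36, 42], [8, 12, 36], [12, 35, 47], [25, 39, 47], [2, 16, 25], [2, 12, 42], [12, 24, 30], [13, 24, 34], [13, 18, 47], [11, 21, 47], [0, 21, 36], [0, 11, 19], [15, 19, 39], [6, 28, 39], [13, 28, 41], [8, 41, 47], [6, 31, 47], [21, 31, 46], [8, 29, 46], [3, 8, 15], [3, 23, 25], [1, 10, 25], [1, 34, 38], [14, 22, 38], [22, 27, 39], [27, 31, 45], [5, 31, 40], [5, 12, 22], [22, 25, 36], [6, 12, 25], [6, 26, 46], [8, 26, 43], [8, 14, 21], [5, 21, 27], [5, 33, 42], [3, 27, 33], [3, 6, 18], [4, 6, 19], [19, 41, 46], [12, 18, 46], [18, 24, 32], [17, 23, 24], [17, 18, 44], [18, 29, 40], [17, 29, 45], [1, 11, 45], [1, 29, 42], [9, 12, 29], [4, 9, 17], [17, 27, 36], [12, 27, 44], [4, 12, 28], [4, 20, 42], [19, 26, 42], [17, 19, 34], [20,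 28, 34], [10, 20, 45], [10, 14, 40], [6, 14, 44], [2, 6, 23], [2, 11, 34], [11, 27, 38], [7, 13, 27], [2, 7, 30], [2, 33, 41], [5, 41, 43], [5, 6, 36], [2, 20, 36], [14, 20, 30], [5, 25, 30], [5, 16, 29], [16, 20, 32], [20, 33, 43], [9, 19, 33], [9, 18, 28], [3, 28, 37], [3, 38, 47], [15, 20, 47], [15, 27, 37], [8, 35, 37], [14, 35, 42], [14, 28, 31], [26, 31, 37], [4, 15, 26], [0, 15, 43], [0, 29, 41], [16, 21, 41], [10, 16, 27], [10, 15, 21], [15, 25, 35], [24, 35, 44], [20, 24, 41], [18, 41, 45], [18, 30, 43], [21, 30, 37], [2, 17, 37], [2, 15, 31], [29, 31, 38], [8, 38, 42], [4, 8, 24], [4, 10, 41], [11, 23, 41], [11, 28, 36], [4, 13, 36], [13, 22, 26], [4, 22, 35], [4, 23, 40], [11, 20, 40], [6, 20, 29], [14, 29, 36], [32, 36, 47], [7, 28, 47], [3, 7, 26], [14, 26, 34], [14, 23, 27], [1, 20, 27], [1, 30, 46], [6, 27, 30], [0, 9, 27], [0, 34, 40], [16, 35, 40], [1, 16, 26],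 [1, 6, 13], [13, 19, 32], [4, 32, 43], [1, 17, 43], [17, 32, 39], [1, 21, 32], [1, 24, 31], [24, 39, 45], [12, 23, 45], [7, 12, 20], [7, 24, 40], [10, 24, 47], [10, 23, 36], [34, 36, 45], [0, 6, 45], [6, 15, 34], [29, 34, 47], [33, 40, 47], [6, 33, 38], [17, 38, 46], [22, 33, 46], [15, 22, 29], [29, 39, 44], [13, 37, 44], [5, 13, 45], [5, 18, 39], [11, 18, 31], [12, 31, 43], [23, 39, 43], [7, 33, 39], [8, 33, 45], [0, 8, 44], [0, 22, 32], [9, 15, 32], [11, 15, 24], [11, 29, 43], [13, 21, 29], [8, 13, 23], [23, 26, 47], [14, 19, 47], [1, 14, 18], [1, 9, 36], [9, 30, 45], [26, 30, 41], [9, 41, 44], [5, 9, 35], [5, 7, 19], [1, 7, 23], [1, 8, 39], [8, 17, 30], [6, 17, 35], [10, 29, 35], [10, 18, 33], [2, 8, 18], [8, 19, 31], [7, 22, 31], [22, 40, 45], [3, 13, 40], [3, 35, 45], [14, 32, 45], [6, 32, 37], [23, 34, 37], [15, 23, 33], [4, 29, 33], [4, 21, 34], [8, 22, 34], [8, 27,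 40], [19, 27, 35], [16, 19, 45], [15, 38, 45], [5, 15, 46]]
def cs8 : List ℕ := [32, 41, 31, 0, 16, 30, 47, 22, 28, 0, 46, 37, 33, 0, 37, 42, 40, 21, 33, 36, 26, 39, 34, 41, 42, 0, 18, 7, 17, 26, 40, 46, 35, 20, 31, 13, 9, 47, 17, 21, 2, 46, 10, 0, 14, 11, 32, 26, 35, 2, 9, 16, 4, 46, 24, 43, 16, 8, 32, 29, 2, 43, 9, 38, 7, 37, 5, 26, 45, 28, 40, 30, 28, 43, 3, 46, 7, 42, 10, 32, 44, 34, 3, 31, 39, 9, 24, 19, 36, 15, 44, 38, 10, 44, 16, 39, 3, 12, 40, 44, 19, 37, 25, 7, 43, 37, 4, 44, 3, 21, 38, 13, 33, 12, 11, 25, 14, 7, 35, 1, 28, 33, 25, 43, 34, 18, 38, 30, 11, 17, 22, 6, 42, 23, 30, 13, 20, 5, 23, 38, 2, 27, 42, 36, 12, 47, 25, 2, 12, 24, 13, 47, 21, 0, 19, 39, 28, 41, 47, 31, 46, 8, 3, 25, 1, 38, 22, 27, 31, 5, 22, 25, 6, 26, 8, 21, 5, 33, 3, 6, 19, 46, 18,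 24, 17, 18, 29, 45, 1, 29, 9, 17, 27, 12, 4, 42, 19, 34, 20, 10, 14, 6, 2, 11, 27, 7, 2, 41, 5, 36, 20, 30, 5, 16, 20, 33, 9, 28, 3, 47, 15, 37, 35, 14, 31, 26, 15, 0, 41, 16, 10, 15, 35, 24, 41, 18, 30, 37, 2, 31, 38, 8, 4, 41, 11, 36, 13, 22, 4, 40, 20, 29, 36, 47, 7, 26, 14, 27, 1, 30, 27, 0, 40, 16, 1, 13, 32, 43, 17, 32, 1, 24, 45, 12, 7, 24, 10, 36, 45, 6, 34, 47, 33, 38, 46, 22, 29, 44, 13, 5, 18, 31, 43, 39, 33, 8, 0, 32, 15, 11, 29, 13, 23, 47, 14, 1, 9, 30, 41, 9, 5, 7, 1, 8, 17, 35, 10, 18, 8, 31, 22, 40, 3, 45, 32, 37, 23, 33, 4, 34, 8, 27, 19, 45, 15, 5]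

end CAHBuild

set_option maxHeartbeats 16000000 in
set_option maxRecDepth 100000 in
set_option exponentiation.threshold 10000 in
/-- For every `t ∈ {3, 4, 5, 6, 8}` there exists a c.a.h. `{3}`-GDD of type `6ᵗ`. -/
theorem exists_cah_threeGDD_type_six_pow_small
    (t : ℕ) (ht : t ∈ ({3, 4, 5, 6, 8} : Finset ℕ)) :
    CAHThreeGDD (Multiset.replicate t 6) := by
  fin_cases ht
  · exact CAHBuild.build 3 (by norm_num) CAHBuild.bs3 CAHBuild.cs3
      ((CAHBuild.pfold (6*3) 0 CAHBuild.bs3).getD 0)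
      (by decide) (by decide) (by decide) (by decide) (by decide) (by decide)
  · exact CAHBuild.build 4 (by norm_num) CAHBuild.bs4 CAHBuild.cs4
      ((CAHBuild.pfold (6*4) 0 CAHBuild.bs4).getD 0)
      (by decide) (by decide) (by decide) (by decide) (by decide) (by decide)
  · exact CAHBuild.build 5 (by norm_num) CAHBuild.bs5 CAHBuild.cs5
      ((CAHBuild.pfold (6*5) 0 CAHBuild.bs5).getD 0)
      (by decide) (by decide) (by decide) (by decide) (by decide) (by decide)
  · exact CAHBuild.build 6 (by norm_num) CAHBuild.bs6 CAHBuild.cs6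
      ((CAHBuild.pfold (6*6) 0 CAHBuild.bs6).getD 0)
      (by decide) (by decide) (by decide) (by decide) (by decide) (by decide)
  · exact CAHBuild.build 8 (by norm_num) CAHBuild.bs8 CAHBuild.cs8
      ((CAHBuild.pfold (6*8) 0 CAHBuild.bs8).getD 0)
      (by decide) (by decide) (by decide) (by decide) (by decide) (by decide)
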